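/- Let M : Matrix (Fin m) (Fin m) ℝ be invertible and let P = {b : Fin m → ℝ | bl ≤ b ∧ b ≤ bu ∧ 0 ≤ M.mulVec b}. If b* is an extreme point of P (b* ∈ Set.extremePoints ℝ P) and the non-degeneracy condition 0 < (M.mulVec b*) i holds for every index i, then b* is strongly extremal: for every index i, b* i = bl i or b* i = bu i. -/

import Mathlib

open Matrix

theorem nondegenerate_extreme_point_is_strongly_extremal
    (m : ℕ) (bl bu : Fin m → ℝ) (hb : bl ≤ bu)
    (M : Matrix (Fin m) (Fin m) ℝ) (hM : IsUnit M.det)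
    (bstar : Fin m → ℝ)
    (hext : bstar ∈ Set.extremePoints ℝ
      {b : Fin m → ℝ | bl ≤ b ∧ b ≤ bu ∧ 0 ≤ M.mulVec b})
    (hnondeg : ∀ i : Fin m, 0 < M.mulVec bstar i) :
    ∀ i : Fin m, bstar i = bl i ∨ bstar i = bu i := by
  intro i
  by_contra h
  push_neg at h
  obtain ⟨⟨hl, hu, hpos⟩, hstep⟩ := hext
  have hli : bl i < bstar i := lt_of_le_of_ne (hl i) (Ne.symm h.1)
  have hui : bstar i < bu i := lt_of_le_of_ne (hu i) h.2
  have hne : (Finset.univ : Finset (Fin m)).Nonempty := ⟨i, Finset.mem_univ i⟩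
  set ε : ℝ := min (min (bstar i - bl i) (bu i - bstar i))
      (Finset.univ.inf' hne fun j => M.mulVec bstar j / (|M j i| + 1)) with hε
  have hεpos : 0 < ε := by
    refine lt_min (lt_min (by linarith) (by linarith)) ?_
    rw [Finset.lt_inf'_iff]
    intro j _
    have h1 : 0 < |M j i| + 1 := by positivity
    exact div_pos (hnondeg j) h1
  have hkey : ∀ j, ε * |M j i| ≤ M.mulVec bstar j := by
    intro j
    have h1 : ε ≤ M.mulVec bstar j / (|M j i| + 1) :=
      le_trans (min_le_right _ _) (Finset.inf'_le _ (Finset.mem_univ j))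
    have h2 : 0 < |M j i| + 1 := by positivity
    have h3 : ε * (|M j i| + 1) ≤ M.mulVec bstar j := by
      rw [← div_mul_cancel₀ (M.mulVec bstar j) (ne_of_gt h2)]
      exact mul_le_mul_of_nonneg_right h1 (le_of_lt h2)
    nlinarith [abs_nonneg (M j i), hεpos]
  have hε1 : ε ≤ bstar i - bl i := le_trans (min_le_left _ _) (min_le_left _ _)
  have hε2 : ε ≤ bu i - bstar i := le_trans (min_le_left _ _) (min_le_right _ _)
  set v : Fin m → ℝ := Pi.single i ε with hv
  have hvj : ∀ j, |v j| ≤ ε := by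
    intro j
    rcases eq_or_ne j i with rfl | hj
    · simp [hv, abs_of_pos hεpos]
    · simp [hv, Pi.single_eq_of_ne hj, le_of_lt hεpos]
  have hMv : ∀ j, |M.mulVec v j| ≤ M.mulVec bstar j := by
    intro j
    have : M.mulVec v j = M j i * ε := by
      simp [hv]
    rw [this, abs_mul, abs_of_pos hεpos]
    calc |M j i| * ε = ε * |M j i| := mul_comm _ _
      _ ≤ _ := hkey j
  have hxmem : bstar - v ∈ {b : Fin m → ℝ | bl ≤ b ∧ b ≤ bu ∧ 0 ≤ M.mulVec b} := by
    refine ⟨fun j => ?_, fun j => ?_, fun j => ?_⟩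
    · rcases eq_or_ne j i with rfl | hj
      · simp only [Pi.sub_apply, hv, Pi.single_eq_same]; linarith
      · simp only [Pi.sub_apply, hv, Pi.single_eq_of_ne hj]; simpa using hl j
    · rcases eq_or_ne j i with rfl | hj
      · simp only [Pi.sub_apply, hv, Pi.single_eq_same]; linarith
      · simp only [Pi.sub_apply, hv, Pi.single_eq_of_ne hj]; simpa using hu j
    · have := abs_le.mp (hMv j)
      simp only [Matrix.mulVec_sub, Pi.sub_apply, Pi.zero_apply]
      linarith [this.2]
  have hymem : bstar + v ∈ {b : Fin m → ℝ | bl ≤ b ∧ b ≤ bu ∧ 0 ≤ M.mulVec b} := by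
    refine ⟨fun j => ?_, fun j => ?_, fun j => ?_⟩
    · rcases eq_or_ne j i with rfl | hj
      · simp only [Pi.add_apply, hv, Pi.single_eq_same]; linarith
      · simp only [Pi.add_apply, hv, Pi.single_eq_of_ne hj]; simpa using hl j
    · rcases eq_or_ne j i with rfl | hj
      · simp only [Pi.add_apply, hv, Pi.single_eq_same]; linarith
      · simp only [Pi.add_apply, hv, Pi.single_eq_of_ne hj]; simpa using hu j
    · have := abs_le.mp (hMv j)
      simp only [Matrix.mulVec_add, Pi.add_apply, Pi.zero_apply]
      linarith [this.1]
  have hseg : bstar ∈ openSegment ℝ (bstar - v) (bstar + v) := by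
    refine ⟨1/2, 1/2, by norm_num, by norm_num, by norm_num, ?_⟩
    ext j
    simp only [Pi.add_apply, Pi.smul_apply, Pi.sub_apply, smul_eq_mul]
    ring
  have := (hstep hxmem hymem hseg)
  have : bstar i - v i = bstar i := congrFun this i
  simp only [hv, Pi.single_eq_same] at this
  linarith
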